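/- Let n ≥ 1 and N ≥ 1 be integers, and let μ be a finite Borel measure on ℂ^N with bounded support for which there are constants C₀ > 0 and R > 0 with μ(B_ρ(w)) ≤ C₀ ρ^{2n} for every w ∈ ℂ^N and every 0 < ρ ≤ R. Fix 0 ≤ γ < 2n and define the kernel k_γ(ζ, z) := ‖z‖^γ / ( ‖ζ‖^γ · ‖ζ − z‖^{2n−1} ) for ζ ≠ 0, ζ ≠ z. Let p satisfy 2n/(2n − γ) < p ≤ ∞. Then there exists a constant C > 0 such that for every f ∈ L^p(μ): the integral T f(z) := ∫ f(ζ) k_γ(ζ, z) dμ(ζ) converges absolutely for μ-almost every z, and ‖T f‖_{L^p(μ)} ≤ C ‖f‖_{L^p(μ)}. -/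

import Mathlib

open MeasureTheory Metric Filter
open scoped NNReal ENNReal Topology

set_option linter.unusedSectionVars false
set_option maxHeartbeats 1000000

variable {E : Type*} [NormedAddCommGroup E] [MeasurableSpace E] [BorelSpace E]

/-- Singletons are null for a measure with an upper Ahlfors bound of positive exponent. -/
lemma aux_singleton_null (μ : Measure E) (C₀ R : ℝ) (m : ℕ) (hm : 1 ≤ m) (hR : 0 < R)
    (hA : ∀ (w : E) (ρ : ℝ), 0 < ρ → ρ ≤ R → μ (ball w ρ) ≤ ENNReal.ofReal (C₀ * ρ ^ m))
    (w : E) : μ {w} = 0 := by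
  have hlim : Tendsto (fun k : ℕ => ENNReal.ofReal (C₀ * (R / (k + 1)) ^ m)) atTop (𝓝 0) := by
    rw [← ENNReal.ofReal_zero]
    apply ENNReal.tendsto_ofReal
    have h1 : Tendsto (fun k : ℕ => R / (k + 1)) atTop (𝓝 0) := by
      have := (tendsto_one_div_add_atTop_nhds_zero_nat).const_mul R
      simpa [mul_one_div, div_eq_mul_inv] using this
    have h2 : Tendsto (fun k : ℕ => C₀ * (R / (k + 1)) ^ m) atTop (𝓝 (C₀ * 0 ^ m)) :=
      (h1.pow m).const_mul C₀
    simpa [zero_pow (by omega : m ≠ 0)] using h2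
  have hle : ∀ k : ℕ, μ {w} ≤ ENNReal.ofReal (C₀ * (R / (k + 1)) ^ m) := by
    intro k
    have hρ : (0:ℝ) < R / (k + 1) := by positivity
    have hρR : R / (k + 1) ≤ R := by
      rw [div_le_iff₀ (by positivity)]
      nlinarith [Nat.cast_nonneg (α := ℝ) k]
    refine le_trans (measure_mono ?_) (hA w _ hρ hρR)
    intro x hx
    simp only [Set.mem_singleton_iff] at hx
    simp [hx, mem_ball, hρ]
  have := ge_of_tendsto hlim (Eventually.of_forall hle)
  simpa using this

/-- Dyadic estimate: integral of `‖ζ - w‖ ^ (-α)` over a small ball. -/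
lemma aux_dyadic (μ : Measure E) (C₀ R : ℝ) (m : ℕ) (hm : 1 ≤ m) (hC₀ : 0 < C₀) (hR : 0 < R)
    (hA : ∀ (w : E) (ρ : ℝ), 0 < ρ → ρ ≤ R → μ (ball w ρ) ≤ ENNReal.ofReal (C₀ * ρ ^ m))
    (α : ℝ) (hα0 : 0 ≤ α) (hα : α < m) :
    ∃ D : ℝ, 0 < D ∧ ∀ (w : E) (r : ℝ), 0 < r → r ≤ R →
      ∫⁻ ζ in ball w r, ENNReal.ofReal (‖ζ - w‖ ^ (-α)) ∂μ
        ≤ ENNReal.ofReal (D * r ^ ((m : ℝ) - α)) := by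
  set c : ℝ := (m : ℝ) - α with hcdef
  have hc0 : 0 < c := by simp [hcdef]; linarith
  set q : ℝ := (2 : ℝ) ^ (-c) with hqdef
  have hq0 : 0 < q := Real.rpow_pos_of_pos two_pos _
  have hq1 : q < 1 := Real.rpow_lt_one_of_one_lt_of_neg one_lt_two (by linarith)
  have h1q : (0:ℝ) < 1 - q := by linarith
  refine ⟨C₀ * 2 ^ m * (1 - q)⁻¹, by positivity, ?_⟩
  intro w r hr hrR
  have hμw : μ {w} = 0 := aux_singleton_null μ C₀ R m hm hR hA w
  set g : E → ℝ≥0∞ := fun ζ => ENNReal.ofReal (‖ζ - w‖ ^ (-α)) with hgdef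
  set S : ℕ → Set E := fun k => ball w (r / 2 ^ k) \ ball w (r / 2 ^ (k + 1)) with hSdef
  -- coverage
  have hcov : ball w r \ {w} ⊆ ⋃ k, S k := by
    intro ζ hζ
    obtain ⟨hζr, hζw⟩ := hζ
    rw [mem_ball] at hζr
    have hd0 : 0 < dist ζ w := dist_pos.2 (by simpa using hζw)
    have hex : ∃ k : ℕ, r / 2 ^ (k + 1) ≤ dist ζ w := by
      obtain ⟨k, hk⟩ := pow_unbounded_of_one_lt (r / dist ζ w) (one_lt_two (α := ℝ))
      refine ⟨k, ?_⟩
      rw [div_le_iff₀ (by positivity)]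
      rw [div_lt_iff₀ hd0] at hk
      have h2 : (2:ℝ) ^ k ≤ 2 ^ (k + 1) := by
        apply pow_le_pow_right₀ one_le_two; omega
      nlinarith
    classical
    set k₀ := Nat.find hex with hk₀
    have hspec : r / 2 ^ (k₀ + 1) ≤ dist ζ w := Nat.find_spec hex
    have hup : dist ζ w < r / 2 ^ k₀ := by
      rcases Nat.eq_zero_or_pos k₀ with h0 | h0
      · simpa [h0] using hζr
      · have hmin := Nat.find_min hex (m := k₀ - 1) (by omega)
        push_neg at hmin
        simpa [Nat.sub_add_cancel h0] using hmin
    exact Set.mem_iUnion.2 ⟨k₀, by simp [hSdef, mem_ball, hup, not_lt.2 hspec]⟩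
  -- reduce to union of shells
  have step1 : ∫⁻ ζ in ball w r, g ζ ∂μ = ∫⁻ ζ in ball w r \ {w}, g ζ ∂μ := by
    refine setLIntegral_congr (MeasureTheory.ae_eq_set.2 ⟨?_, ?_⟩)
    · rw [Set.diff_diff_right_self]
      exact measure_mono_null Set.inter_subset_right hμw
    · simp
  have step2 : ∫⁻ ζ in ball w r \ {w}, g ζ ∂μ ≤ ∑' k, ∫⁻ ζ in S k, g ζ ∂μ :=
    le_trans (lintegral_mono_set hcov) (lintegral_iUnion_le S g)
  -- estimate on each shell
  have term : ∀ k : ℕ, ∫⁻ ζ in S k, g ζ ∂μ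
      ≤ ENNReal.ofReal (C₀ * 2 ^ m * r ^ c) * (ENNReal.ofReal q) ^ k := by
    intro k
    have hx0 : (0:ℝ) < r / 2 ^ (k + 1) := by positivity
    set x : ℝ := r / 2 ^ (k + 1) with hxdef
    have hbound : ∀ ζ ∈ S k, g ζ ≤ ENNReal.ofReal (x ^ (-α)) := by
      intro ζ hζ
      have hlow : x ≤ ‖ζ - w‖ := by
        have h2 := hζ.2
        rw [mem_ball, not_lt] at h2
        rw [← dist_eq_norm]; exact h2
      exact ENNReal.ofReal_le_ofReal (Real.rpow_le_rpow_of_nonpos hx0 hlow (neg_nonpos.2 hα0))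
    have hrk : r / 2 ^ k ≤ R := le_trans (div_le_self hr.le (one_le_pow₀ one_le_two)) hrR
    have hμS : μ (S k) ≤ ENNReal.ofReal (C₀ * (r / 2 ^ k) ^ m) :=
      le_trans (measure_mono Set.diff_subset) (hA w _ (by positivity) hrk)
    have hreal : x ^ (-α) * (C₀ * (r / 2 ^ k) ^ m) ≤ (C₀ * 2 ^ m * r ^ c) * q ^ k := by
      have h2x : r / 2 ^ k = 2 * x := by
        rw [hxdef]; field_simp; ring
      have hxm : x ^ (m : ℕ) = x ^ ((m : ℝ)) := (Real.rpow_natCast x m).symm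
      have hcomb : x ^ (-α) * x ^ ((m:ℝ)) = x ^ c := by
        rw [← Real.rpow_add hx0]; congr 1; simp [hcdef]; ring
      have hxc : x ^ c = r ^ c * q ^ (k + 1) := by
        rw [hxdef, Real.div_rpow hr.le (by positivity)]
        have h1 : ((2:ℝ) ^ (k + 1 : ℕ)) ^ (c : ℝ) = ((2:ℝ) ^ (c : ℝ)) ^ (k + 1 : ℕ) := by
          rw [← Real.rpow_natCast (2:ℝ) (k+1), ← Real.rpow_natCast ((2:ℝ) ^ c) (k+1),
            ← Real.rpow_mul two_pos.le, ← Real.rpow_mul two_pos.le]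
          congr 1; ring
        rw [h1, hqdef, Real.rpow_neg two_pos.le, inv_pow, div_eq_mul_inv]
      rw [h2x, mul_pow]
      have hre : x ^ (-α) * (C₀ * (2 ^ m * x ^ m)) = C₀ * 2 ^ m * (x ^ (-α) * x ^ ((m:ℝ))) := by
        rw [← hxm]; ring
      rw [hre, hcomb, hxc]
      have h1' : C₀ * 2 ^ m * (r ^ c * q ^ (k + 1)) = (C₀ * 2 ^ m * r ^ c * q ^ k) * q := by
        rw [pow_succ]; ring
      rw [h1']
      have hbase : (0:ℝ) ≤ C₀ * 2 ^ m * r ^ c * q ^ k := by positivity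
      nlinarith [hbase, hq1.le]
    calc ∫⁻ ζ in S k, g ζ ∂μ ≤ ∫⁻ _ in S k, ENNReal.ofReal (x ^ (-α)) ∂μ :=
          setLIntegral_mono measurable_const hbound
      _ = ENNReal.ofReal (x ^ (-α)) * μ (S k) := setLIntegral_const _ _
      _ ≤ ENNReal.ofReal (x ^ (-α)) * ENNReal.ofReal (C₀ * (r / 2 ^ k) ^ m) := by gcongr
      _ = ENNReal.ofReal (x ^ (-α) * (C₀ * (r / 2 ^ k) ^ m)) := by
          rw [← ENNReal.ofReal_mul (by positivity)]
      _ ≤ ENNReal.ofReal ((C₀ * 2 ^ m * r ^ c) * q ^ k) := ENNReal.ofReal_le_ofReal hreal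
      _ = ENNReal.ofReal (C₀ * 2 ^ m * r ^ c) * (ENNReal.ofReal q) ^ k := by
          rw [ENNReal.ofReal_mul (by positivity), ENNReal.ofReal_pow hq0.le]
  -- sum the geometric series
  have hsum : ∑' k, ENNReal.ofReal (C₀ * 2 ^ m * r ^ c) * (ENNReal.ofReal q) ^ k
      = ENNReal.ofReal (C₀ * 2 ^ m * r ^ c) * (1 - ENNReal.ofReal q)⁻¹ := by
    rw [ENNReal.tsum_mul_left, ENNReal.tsum_geometric]
  have hgeo : (1 - ENNReal.ofReal q)⁻¹ = ENNReal.ofReal ((1 - q)⁻¹) := by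
    rw [← ENNReal.ofReal_one, ← ENNReal.ofReal_sub _ hq0.le, ENNReal.ofReal_inv_of_pos h1q]
  calc ∫⁻ ζ in ball w r, g ζ ∂μ = ∫⁻ ζ in ball w r \ {w}, g ζ ∂μ := step1
    _ ≤ ∑' k, ∫⁻ ζ in S k, g ζ ∂μ := step2
    _ ≤ ∑' k, ENNReal.ofReal (C₀ * 2 ^ m * r ^ c) * (ENNReal.ofReal q) ^ k :=
        ENNReal.tsum_le_tsum term
    _ = ENNReal.ofReal (C₀ * 2 ^ m * r ^ c) * ENNReal.ofReal ((1 - q)⁻¹) := by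
        rw [hsum, hgeo]
    _ = ENNReal.ofReal (C₀ * 2 ^ m * (1 - q)⁻¹ * r ^ c) := by
        rw [← ENNReal.ofReal_mul (by positivity)]; congr 1; ring

/-- Uniform bound for the Riesz-type potential of exponent `α < m`. -/
lemma aux_uniform (μ : Measure E) [IsFiniteMeasure μ] (C₀ R : ℝ) (m : ℕ) (hm : 1 ≤ m)
    (hC₀ : 0 < C₀) (hR : 0 < R)
    (hA : ∀ (w : E) (ρ : ℝ), 0 < ρ → ρ ≤ R → μ (ball w ρ) ≤ ENNReal.ofReal (C₀ * ρ ^ m))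
    (α : ℝ) (hα0 : 0 ≤ α) (hα : α < m) :
    ∃ Cu : ℝ, 0 < Cu ∧ ∀ z : E,
      ∫⁻ ζ, ENNReal.ofReal (‖ζ - z‖ ^ (-α)) ∂μ ≤ ENNReal.ofReal Cu := by
  obtain ⟨D, hD, hDy⟩ := aux_dyadic μ C₀ R m hm hC₀ hR hA α hα0 hα
  refine ⟨D * R ^ ((m:ℝ) - α) + R ^ (-α) * (μ Set.univ).toReal, ?_, ?_⟩
  · have h1 : 0 < D * R ^ ((m:ℝ) - α) := mul_pos hD (Real.rpow_pos_of_pos hR _)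
    have h2 : 0 ≤ R ^ (-α) * (μ Set.univ).toReal :=
      mul_nonneg (Real.rpow_nonneg hR.le _) ENNReal.toReal_nonneg
    linarith
  intro z
  have hsplit : ∫⁻ ζ, ENNReal.ofReal (‖ζ - z‖ ^ (-α)) ∂μ
      = ∫⁻ ζ in ball z R, ENNReal.ofReal (‖ζ - z‖ ^ (-α)) ∂μ
        + ∫⁻ ζ in (ball z R)ᶜ, ENNReal.ofReal (‖ζ - z‖ ^ (-α)) ∂μ :=
    (lintegral_add_compl _ measurableSet_ball).symm
  have h1 : ∫⁻ ζ in ball z R, ENNReal.ofReal (‖ζ - z‖ ^ (-α)) ∂μ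
      ≤ ENNReal.ofReal (D * R ^ ((m:ℝ) - α)) := hDy z R hR le_rfl
  have h2 : ∫⁻ ζ in (ball z R)ᶜ, ENNReal.ofReal (‖ζ - z‖ ^ (-α)) ∂μ
      ≤ ENNReal.ofReal (R ^ (-α) * (μ Set.univ).toReal) := by
    have hb : ∀ ζ ∈ (ball z R)ᶜ, ENNReal.ofReal (‖ζ - z‖ ^ (-α))
        ≤ ENNReal.ofReal (R ^ (-α)) := by
      intro ζ hζ
      have : R ≤ ‖ζ - z‖ := by
        have := hζ
        rw [Set.mem_compl_iff, mem_ball, not_lt, dist_eq_norm] at this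
        exact this
      exact ENNReal.ofReal_le_ofReal
        (Real.rpow_le_rpow_of_nonpos hR this (neg_nonpos.2 hα0))
    calc ∫⁻ ζ in (ball z R)ᶜ, ENNReal.ofReal (‖ζ - z‖ ^ (-α)) ∂μ
        ≤ ∫⁻ _ in (ball z R)ᶜ, ENNReal.ofReal (R ^ (-α)) ∂μ :=
          setLIntegral_mono measurable_const hb
      _ = ENNReal.ofReal (R ^ (-α)) * μ (ball z R)ᶜ := setLIntegral_const _ _
      _ ≤ ENNReal.ofReal (R ^ (-α)) * μ Set.univ := by gcongr; exact Set.subset_univ _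
      _ = ENNReal.ofReal (R ^ (-α) * (μ Set.univ).toReal) := by
          rw [ENNReal.ofReal_mul (Real.rpow_nonneg hR.le _),
            ENNReal.ofReal_toReal (measure_ne_top μ _)]
  calc ∫⁻ ζ, ENNReal.ofReal (‖ζ - z‖ ^ (-α)) ∂μ
      = _ + _ := hsplit
    _ ≤ ENNReal.ofReal (D * R ^ ((m:ℝ) - α)) + ENNReal.ofReal (R ^ (-α) * (μ Set.univ).toReal) :=
        add_le_add h1 h2
    _ = ENNReal.ofReal (D * R ^ ((m:ℝ) - α) + R ^ (-α) * (μ Set.univ).toReal) := by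
        rw [← ENNReal.ofReal_add (by positivity)
          (mul_nonneg (Real.rpow_nonneg hR.le _) ENNReal.toReal_nonneg)]

/-- Weighted bound near the origin, valid for all radii. -/
lemma aux_ball0 (μ : Measure E) [IsFiniteMeasure μ] (C₀ R : ℝ) (m : ℕ) (hm : 1 ≤ m)
    (hC₀ : 0 < C₀) (hR : 0 < R)
    (hA : ∀ (w : E) (ρ : ℝ), 0 < ρ → ρ ≤ R → μ (ball w ρ) ≤ ENNReal.ofReal (C₀ * ρ ^ m))
    (β : ℝ) (hβ0 : 0 ≤ β) (hβ : β < m) :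
    ∃ Cv : ℝ, 0 < Cv ∧ ∀ r : ℝ, 0 < r →
      ∫⁻ ζ in ball (0 : E) r, ENNReal.ofReal (‖ζ‖ ^ (-β)) ∂μ
        ≤ ENNReal.ofReal (Cv * r ^ ((m:ℝ) - β)) := by
  obtain ⟨D, hD, hDy⟩ := aux_dyadic μ C₀ R m hm hC₀ hR hA β hβ0 hβ
  obtain ⟨Cu, hCu, hU⟩ := aux_uniform μ C₀ R m hm hC₀ hR hA β hβ0 hβ
  set c : ℝ := (m:ℝ) - β with hcdef
  have hc0 : 0 < c := by simp only [hcdef]; linarith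
  refine ⟨D + Cu / R ^ c, by positivity, ?_⟩
  intro r hr
  have heq : ∀ z : E, (fun ζ : E => ENNReal.ofReal (‖ζ - z‖ ^ (-β)))
      = (fun ζ : E => ENNReal.ofReal (‖ζ - z‖ ^ (-β))) := fun _ => rfl
  rcases le_or_gt r R with hrR | hrR
  · have := hDy 0 r hr hrR
    simp only [sub_zero] at this
    refine le_trans this (ENNReal.ofReal_le_ofReal ?_)
    have : (0:ℝ) ≤ r ^ c := Real.rpow_nonneg hr.le _
    have hCu' : 0 ≤ Cu / R ^ c := by positivity
    nlinarith
  · have h1 : ∫⁻ ζ in ball (0:E) r, ENNReal.ofReal (‖ζ‖ ^ (-β)) ∂μ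
        ≤ ENNReal.ofReal Cu := by
      refine le_trans (setLIntegral_le_lintegral _ _) ?_
      have := hU 0
      simpa [sub_zero] using this
    refine le_trans h1 (ENNReal.ofReal_le_ofReal ?_)
    have hRc : (0:ℝ) < R ^ c := Real.rpow_pos_of_pos hR _
    have hrc : R ^ c ≤ r ^ c := Real.rpow_le_rpow hR.le hrR.le hc0.le
    have hD' : (0:ℝ) ≤ D * r ^ c := by positivity
    have : Cu = Cu / R ^ c * R ^ c := by field_simp
    nlinarith [div_nonneg hCu.le hRc.le]

/-- Core potential estimate: weighted Riesz potential bound. -/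
lemma aux_core (μ : Measure E) [IsFiniteMeasure μ] (C₀ R : ℝ) (m : ℕ) (hm : 2 ≤ m)
    (hC₀ : 0 < C₀) (hR : 0 < R)
    (hA : ∀ (w : E) (ρ : ℝ), 0 < ρ → ρ ≤ R → μ (ball w ρ) ≤ ENNReal.ofReal (C₀ * ρ ^ m))
    (β : ℝ) (hβ0 : 0 ≤ β) (hβ : β < m) (B : ℝ) (hB : 0 < B) :
    ∃ A : ℝ, 0 < A ∧ ∀ z : E, z ≠ 0 → ‖z‖ ≤ B →
      ∫⁻ ζ, ENNReal.ofReal (‖ζ‖ ^ (-β) * ‖ζ - z‖ ^ (-((m:ℝ) - 1))) ∂μ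
        ≤ ENNReal.ofReal (A * ‖z‖ ^ (-β)) := by
  have hm1 : 1 ≤ m := by omega
  set e : ℝ := (m:ℝ) - 1 with hedef
  have he0 : 0 ≤ e := by
    have : (1:ℝ) ≤ (m:ℝ) := by exact_mod_cast hm1
    simp only [hedef]; linarith
  have hem : e < (m:ℝ) := by simp only [hedef]; linarith
  obtain ⟨Cv, hCv, hV⟩ := aux_ball0 μ C₀ R m hm1 hC₀ hR hA β hβ0 hβ
  obtain ⟨Cu, hCu, hU⟩ := aux_uniform μ C₀ R m hm1 hC₀ hR hA e he0 hem
  refine ⟨Cv * (B / 2) * 2 ^ β + 2 ^ β * Cu, by positivity, ?_⟩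
  intro z hz hzB
  have hz0 : (0:ℝ) < ‖z‖ := norm_pos_iff.2 hz
  set t : ℝ := ‖z‖ / 2 with htdef
  have ht0 : 0 < t := by positivity
  have hmeas1 : Measurable fun ζ : E => ENNReal.ofReal (‖ζ‖ ^ (-β)) := by fun_prop
  have hmeas2 : Measurable fun ζ : E => ENNReal.ofReal (‖ζ - z‖ ^ (-e)) := by fun_prop
  have hsplit : ∫⁻ ζ, ENNReal.ofReal (‖ζ‖ ^ (-β) * ‖ζ - z‖ ^ (-e)) ∂μ
      = ∫⁻ ζ in ball (0:E) t, ENNReal.ofReal (‖ζ‖ ^ (-β) * ‖ζ - z‖ ^ (-e)) ∂μ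
        + ∫⁻ ζ in (ball (0:E) t)ᶜ, ENNReal.ofReal (‖ζ‖ ^ (-β) * ‖ζ - z‖ ^ (-e)) ∂μ :=
    (lintegral_add_compl _ measurableSet_ball).symm
  -- region 1 : small ‖ζ‖
  have h1 : ∫⁻ ζ in ball (0:E) t, ENNReal.ofReal (‖ζ‖ ^ (-β) * ‖ζ - z‖ ^ (-e)) ∂μ
      ≤ ENNReal.ofReal (Cv * (B / 2) * 2 ^ β * ‖z‖ ^ (-β)) := by
    have hb : ∀ ζ ∈ ball (0:E) t, ENNReal.ofReal (‖ζ‖ ^ (-β) * ‖ζ - z‖ ^ (-e))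
        ≤ ENNReal.ofReal (t ^ (-e)) * ENNReal.ofReal (‖ζ‖ ^ (-β)) := by
      intro ζ hζ
      rw [mem_ball_zero_iff] at hζ
      have hlow : t ≤ ‖ζ - z‖ := by
        have h' : ‖z‖ - ‖ζ‖ ≤ ‖z - ζ‖ := norm_sub_norm_le z ζ
        rw [norm_sub_rev] at h'
        simp only [htdef] at hζ ⊢
        linarith
      have : ‖ζ - z‖ ^ (-e) ≤ t ^ (-e) :=
        Real.rpow_le_rpow_of_nonpos ht0 hlow (neg_nonpos.2 he0)
      rw [← ENNReal.ofReal_mul (Real.rpow_nonneg ht0.le _), mul_comm (t ^ (-e))]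
      exact ENNReal.ofReal_le_ofReal
        (mul_le_mul_of_nonneg_left this (Real.rpow_nonneg (norm_nonneg _) _))
    calc ∫⁻ ζ in ball (0:E) t, ENNReal.ofReal (‖ζ‖ ^ (-β) * ‖ζ - z‖ ^ (-e)) ∂μ
        ≤ ∫⁻ ζ in ball (0:E) t, ENNReal.ofReal (t ^ (-e)) * ENNReal.ofReal (‖ζ‖ ^ (-β)) ∂μ :=
          setLIntegral_mono (by fun_prop) hb
      _ = ENNReal.ofReal (t ^ (-e)) * ∫⁻ ζ in ball (0:E) t, ENNReal.ofReal (‖ζ‖ ^ (-β)) ∂μ :=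
          lintegral_const_mul _ hmeas1
      _ ≤ ENNReal.ofReal (t ^ (-e)) * ENNReal.ofReal (Cv * t ^ ((m:ℝ) - β)) := by
          gcongr
          exact hV t ht0
      _ = ENNReal.ofReal (t ^ (-e) * (Cv * t ^ ((m:ℝ) - β))) := by
          rw [← ENNReal.ofReal_mul (Real.rpow_nonneg ht0.le _)]
      _ ≤ ENNReal.ofReal (Cv * (B / 2) * 2 ^ β * ‖z‖ ^ (-β)) := by
          apply ENNReal.ofReal_le_ofReal
          have hcomb : t ^ (-e) * t ^ ((m:ℝ) - β) = t ^ (1 - β) := by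
            rw [← Real.rpow_add ht0]; congr 1; simp only [hedef]; ring
          have h1b : t ^ ((1:ℝ) - β) = t * t ^ (-β) := by
            rw [show (1:ℝ) - β = 1 + -β by ring, Real.rpow_add ht0, Real.rpow_one]
          have htβ : t ^ (-β) = 2 ^ β * ‖z‖ ^ (-β) := by
            simp only [htdef]
            rw [Real.div_rpow (norm_nonneg z) (by norm_num), Real.rpow_neg (norm_nonneg z),
              Real.rpow_neg (by norm_num : (0:ℝ) ≤ 2)]
            field_simp
          have htB : t ≤ B / 2 := by simp only [htdef]; linarith
          calc t ^ (-e) * (Cv * t ^ ((m:ℝ) - β)) = Cv * (t ^ (-e) * t ^ ((m:ℝ) - β)) := by ring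
            _ = Cv * (t * t ^ (-β)) := by rw [hcomb, h1b]
            _ ≤ Cv * ((B/2) * t ^ (-β)) := by
                apply mul_le_mul_of_nonneg_left _ hCv.le
                exact mul_le_mul_of_nonneg_right htB (Real.rpow_nonneg ht0.le _)
            _ = Cv * (B / 2) * (2 ^ β * ‖z‖ ^ (-β)) := by rw [htβ]; ring
            _ = Cv * (B / 2) * 2 ^ β * ‖z‖ ^ (-β) := by ring
  -- region 2 : ‖ζ‖ ≥ ‖z‖/2
  have h2 : ∫⁻ ζ in (ball (0:E) t)ᶜ, ENNReal.ofReal (‖ζ‖ ^ (-β) * ‖ζ - z‖ ^ (-e)) ∂μ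
      ≤ ENNReal.ofReal (2 ^ β * Cu * ‖z‖ ^ (-β)) := by
    have hb : ∀ ζ ∈ (ball (0:E) t)ᶜ, ENNReal.ofReal (‖ζ‖ ^ (-β) * ‖ζ - z‖ ^ (-e))
        ≤ ENNReal.ofReal (t ^ (-β)) * ENNReal.ofReal (‖ζ - z‖ ^ (-e)) := by
      intro ζ hζ
      rw [Set.mem_compl_iff, mem_ball_zero_iff, not_lt] at hζ
      have : ‖ζ‖ ^ (-β) ≤ t ^ (-β) :=
        Real.rpow_le_rpow_of_nonpos ht0 hζ (neg_nonpos.2 hβ0)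
      rw [← ENNReal.ofReal_mul (Real.rpow_nonneg ht0.le _)]
      exact ENNReal.ofReal_le_ofReal
        (mul_le_mul_of_nonneg_right this (Real.rpow_nonneg (norm_nonneg _) _))
    calc ∫⁻ ζ in (ball (0:E) t)ᶜ, ENNReal.ofReal (‖ζ‖ ^ (-β) * ‖ζ - z‖ ^ (-e)) ∂μ
        ≤ ∫⁻ ζ in (ball (0:E) t)ᶜ,
            ENNReal.ofReal (t ^ (-β)) * ENNReal.ofReal (‖ζ - z‖ ^ (-e)) ∂μ :=
          setLIntegral_mono (by fun_prop) hb
      _ = ENNReal.ofReal (t ^ (-β)) * ∫⁻ ζ in (ball (0:E) t)ᶜ,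
            ENNReal.ofReal (‖ζ - z‖ ^ (-e)) ∂μ := lintegral_const_mul _ hmeas2
      _ ≤ ENNReal.ofReal (t ^ (-β)) * ENNReal.ofReal Cu := by
          gcongr
          exact le_trans (setLIntegral_le_lintegral _ _) (hU z)
      _ = ENNReal.ofReal (t ^ (-β) * Cu) := by
          rw [← ENNReal.ofReal_mul (Real.rpow_nonneg ht0.le _)]
      _ ≤ ENNReal.ofReal (2 ^ β * Cu * ‖z‖ ^ (-β)) := by
          apply ENNReal.ofReal_le_ofReal
          have htβ : t ^ (-β) = 2 ^ β * ‖z‖ ^ (-β) := by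
            simp only [htdef]
            rw [Real.div_rpow (norm_nonneg z) (by norm_num), Real.rpow_neg (norm_nonneg z),
              Real.rpow_neg (by norm_num : (0:ℝ) ≤ 2)]
            field_simp
          rw [htβ]; ring_nf; exact le_refl _
  calc ∫⁻ ζ, ENNReal.ofReal (‖ζ‖ ^ (-β) * ‖ζ - z‖ ^ (-e)) ∂μ = _ + _ := hsplit
    _ ≤ ENNReal.ofReal (Cv * (B / 2) * 2 ^ β * ‖z‖ ^ (-β))
        + ENNReal.ofReal (2 ^ β * Cu * ‖z‖ ^ (-β)) := add_le_add h1 h2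
    _ = ENNReal.ofReal ((Cv * (B / 2) * 2 ^ β + 2 ^ β * Cu) * ‖z‖ ^ (-β)) := by
        rw [← ENNReal.ofReal_add (by positivity)
          (by positivity), ← add_mul]

/-- Schur test for integral operators on `L^p` (lintegral version). -/
lemma aux_schur {α : Type*} [MeasurableSpace α] (μ : Measure α) [SFinite μ]
    (K : α → α → ℝ≥0∞) (hK : Measurable (Function.uncurry K))
    (H : α → ℝ≥0∞) (hH : Measurable H)
    (hH0 : ∀ᵐ x ∂μ, H x ≠ 0) (hHtop : ∀ x, H x ≠ ∞)
    (p q : ℝ) (hpq : p.HolderConjugate q) (A : ℝ≥0∞) (hA0 : A ≠ 0) (hAtop : A ≠ ∞)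
    (hi : ∀ᵐ z ∂μ, ∫⁻ ζ, K ζ z * H ζ ^ q ∂μ ≤ A * H z ^ q)
    (hii : ∀ᵐ ζ ∂μ, ∫⁻ z, K ζ z * H z ^ p ∂μ ≤ A * H ζ ^ p)
    (g : α → ℝ≥0∞) (hg : AEMeasurable g μ) :
    ∫⁻ z, (∫⁻ ζ, g ζ * K ζ z ∂μ) ^ p ∂μ ≤ A ^ p * ∫⁻ x, g x ^ p ∂μ := by
  have hp0 : 0 < p := hpq.pos
  have hq0 : 0 < q := hpq.symm.pos
  -- replace `g` by a measurable representative
  obtain ⟨g', hg'meas, hgg'⟩ : ∃ g', Measurable g' ∧ g =ᵐ[μ] g' :=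
    ⟨hg.mk g, hg.measurable_mk, hg.ae_eq_mk⟩
  have hinner : ∀ z, ∫⁻ ζ, g ζ * K ζ z ∂μ = ∫⁻ ζ, g' ζ * K ζ z ∂μ := fun z =>
    lintegral_congr_ae (hgg'.mono fun ζ h => by simp only [h])
  have hgp : ∫⁻ x, g x ^ p ∂μ = ∫⁻ x, g' x ^ p ∂μ :=
    lintegral_congr_ae (hgg'.mono fun ζ h => by simp only [h])
  simp_rw [hinner, hgp]
  clear hinner hgp hgg' hg g
  -- notation
  set G : α → ℝ≥0∞ := fun x => g' x * (H x)⁻¹ with hGdef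
  have hGmeas : Measurable G := hg'meas.mul hH.inv
  have hsect : ∀ z, Measurable fun ζ => K ζ z := fun z =>
    hK.comp (measurable_id.prodMk measurable_const)
  have hsect' : ∀ ζ, Measurable fun z => K ζ z := fun ζ =>
    hK.comp (measurable_const.prodMk measurable_id)
  -- pointwise Hölder step
  have key : ∀ᵐ z ∂μ, (∫⁻ ζ, g' ζ * K ζ z ∂μ) ^ p
      ≤ (A * H z ^ q) ^ (p / q) * ∫⁻ ζ, G ζ ^ p * K ζ z ∂μ := by
    filter_upwards [hi] with z hiz
    have hstep : ∫⁻ ζ, g' ζ * K ζ z ∂μ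
        ≤ (∫⁻ ζ, G ζ ^ p * K ζ z ∂μ) ^ (1 / p) * (A * H z ^ q) ^ (1 / q) := by
      have hcongr : ∫⁻ ζ, g' ζ * K ζ z ∂μ
          = ∫⁻ ζ, ((fun ζ => G ζ * K ζ z ^ (1 / p)) * (fun ζ => H ζ * K ζ z ^ (1 / q))) ζ ∂μ := by
        refine lintegral_congr_ae ?_
        filter_upwards [hH0] with ζ hζ
        have hKsplit : K ζ z ^ (1 / p) * K ζ z ^ (1 / q) = K ζ z := by
          rw [← ENNReal.rpow_add_of_nonneg _ _ (by positivity) (by positivity)]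
          rw [one_div, one_div, hpq.inv_add_inv_eq_one, ENNReal.rpow_one]
        have hGH : G ζ * H ζ = g' ζ := by
          rw [hGdef]
          simp only
          rw [mul_assoc, ENNReal.inv_mul_cancel hζ (hHtop ζ), mul_one]
        simp only [Pi.mul_apply]
        rw [mul_mul_mul_comm, hGH, hKsplit]
      rw [hcongr]
      calc ∫⁻ ζ, ((fun ζ => G ζ * K ζ z ^ (1 / p)) * (fun ζ => H ζ * K ζ z ^ (1 / q))) ζ ∂μ
          ≤ (∫⁻ ζ, (G ζ * K ζ z ^ (1 / p)) ^ p ∂μ) ^ (1 / p)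
            * (∫⁻ ζ, (H ζ * K ζ z ^ (1 / q)) ^ q ∂μ) ^ (1 / q) :=
            ENNReal.lintegral_mul_le_Lp_mul_Lq μ hpq
              ((hGmeas.mul ((hsect z).pow_const _)).aemeasurable)
              ((hH.mul ((hsect z).pow_const _)).aemeasurable)
        _ = (∫⁻ ζ, G ζ ^ p * K ζ z ∂μ) ^ (1 / p) * (∫⁻ ζ, H ζ ^ q * K ζ z ∂μ) ^ (1 / q) := by
            congr 2
            · refine lintegral_congr fun ζ => ?_
              rw [ENNReal.mul_rpow_of_nonneg _ _ hp0.le, ← ENNReal.rpow_mul,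
                one_div, inv_mul_cancel₀ hp0.ne', ENNReal.rpow_one]
            · refine lintegral_congr fun ζ => ?_
              rw [ENNReal.mul_rpow_of_nonneg _ _ hq0.le, ← ENNReal.rpow_mul,
                one_div, inv_mul_cancel₀ hq0.ne', ENNReal.rpow_one]
        _ ≤ (∫⁻ ζ, G ζ ^ p * K ζ z ∂μ) ^ (1 / p) * (A * H z ^ q) ^ (1 / q) := by
            gcongr
            simpa [mul_comm] using hiz
    calc (∫⁻ ζ, g' ζ * K ζ z ∂μ) ^ p
        ≤ ((∫⁻ ζ, G ζ ^ p * K ζ z ∂μ) ^ (1 / p) * (A * H z ^ q) ^ (1 / q)) ^ p :=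
          ENNReal.rpow_le_rpow hstep hp0.le
      _ = (A * H z ^ q) ^ (p / q) * ∫⁻ ζ, G ζ ^ p * K ζ z ∂μ := by
          rw [ENNReal.mul_rpow_of_nonneg _ _ hp0.le, ← ENNReal.rpow_mul, ← ENNReal.rpow_mul,
            one_div_mul_cancel hp0.ne', ENNReal.rpow_one]
          rw [show 1 / q * p = p / q by ring]
          ring
  -- integrate in z and apply Tonelli
  calc ∫⁻ z, (∫⁻ ζ, g' ζ * K ζ z ∂μ) ^ p ∂μ
      ≤ ∫⁻ z, (A * H z ^ q) ^ (p / q) * ∫⁻ ζ, G ζ ^ p * K ζ z ∂μ ∂μ := lintegral_mono_ae key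
    _ = A ^ (p / q) * ∫⁻ z, H z ^ p * ∫⁻ ζ, G ζ ^ p * K ζ z ∂μ ∂μ := by
        rw [← lintegral_const_mul' _ _ (ENNReal.rpow_ne_top_of_nonneg (by positivity) hAtop)]
        refine lintegral_congr fun z => ?_
        rw [ENNReal.mul_rpow_of_nonneg _ _ (by positivity), ← ENNReal.rpow_mul,
          mul_div_cancel₀ _ hq0.ne']
        ring
    _ = A ^ (p / q) * ∫⁻ z, ∫⁻ ζ, H z ^ p * (G ζ ^ p * K ζ z) ∂μ ∂μ := by
        congr 1
        refine lintegral_congr fun z => ?_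
        rw [← lintegral_const_mul' _ _ (ENNReal.rpow_ne_top_of_nonneg hp0.le (hHtop z))]
    _ = A ^ (p / q) * ∫⁻ ζ, ∫⁻ z, H z ^ p * (G ζ ^ p * K ζ z) ∂μ ∂μ := by
        congr 1
        refine lintegral_lintegral_swap ?_
        apply Measurable.aemeasurable
        apply Measurable.mul
        · exact ((hH.comp measurable_fst).pow_const _)
        · exact (((hGmeas.comp measurable_snd).pow_const _).mul (hK.comp measurable_swap))
    _ ≤ A ^ (p / q) * ∫⁻ ζ, G ζ ^ p * (A * H ζ ^ p) ∂μ := by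
        refine mul_le_mul_right (lintegral_mono_ae ?_) _
        filter_upwards [hii] with ζ hiiζ
        have heq : ∫⁻ z, H z ^ p * (G ζ ^ p * K ζ z) ∂μ
            = G ζ ^ p * ∫⁻ z, K ζ z * H z ^ p ∂μ := by
          rw [← lintegral_const_mul _ (f := fun z => K ζ z * H z ^ p) ((hsect' ζ).mul (hH.pow_const _))]
          refine lintegral_congr fun z => ?_
          ring
        rw [heq]
        exact mul_le_mul_right hiiζ _
    _ = A ^ p * ∫⁻ x, g' x ^ p ∂μ := by
        have heq : ∫⁻ ζ, G ζ ^ p * (A * H ζ ^ p) ∂μ = A * ∫⁻ ζ, G ζ ^ p * H ζ ^ p ∂μ := by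
          rw [← lintegral_const_mul' _ _ hAtop]
          refine lintegral_congr fun ζ => ?_
          ring
        have heq2 : ∫⁻ ζ, G ζ ^ p * H ζ ^ p ∂μ = ∫⁻ x, g' x ^ p ∂μ := by
          refine lintegral_congr_ae ?_
          filter_upwards [hH0] with ζ hζ
          rw [hGdef]
          simp only
          rw [← ENNReal.mul_rpow_of_nonneg _ _ hp0.le, mul_assoc,
            ENNReal.inv_mul_cancel hζ (hHtop ζ), mul_one]
        have hAmul : A ^ (p / q) * A = A ^ p := by
          have h1 : A ^ (p / q) * A ^ (1:ℝ) = A ^ (p / q + 1) :=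
            (ENNReal.rpow_add _ _ hA0 hAtop).symm
          rw [ENNReal.rpow_one] at h1
          rw [h1]
          congr 1
          have hc := hpq.inv_add_inv_eq_one
          field_simp
          field_simp at hc
          linarith
        rw [heq, heq2, ← mul_assoc, hAmul]
/-- `L^p` boundedness of the Koppelman-type integral operator with kernel
`k_γ(ζ,z) = ‖z‖^γ / (‖ζ‖^γ ‖ζ-z‖^{2n-1})` for `2n/(2n-γ) < p ≤ ∞`, with respect to a
finite, boundedly supported measure with upper Ahlfors regularity bound of exponent `2n`. -/
theorem koppelman_kernel_Lp_bounded
    (n N : ℕ) (hn : 1 ≤ n) (hN : 1 ≤ N)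
    [MeasurableSpace (EuclideanSpace ℂ (Fin N))] [BorelSpace (EuclideanSpace ℂ (Fin N))]
    (μ : Measure (EuclideanSpace ℂ (Fin N))) [IsFiniteMeasure μ]
    (R₁ : ℝ) (hsupp : μ ((closedBall (0 : EuclideanSpace ℂ (Fin N)) R₁)ᶜ) = 0)
    (C₀ R : ℝ) (hC₀ : 0 < C₀) (hR : 0 < R)
    (hAhlfors : ∀ (w : EuclideanSpace ℂ (Fin N)) (ρ : ℝ), 0 < ρ → ρ ≤ R →
      μ (ball w ρ) ≤ ENNReal.ofReal (C₀ * ρ ^ (2 * n)))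
    (γ : ℝ) (hγ : 0 ≤ γ) (hγ' : γ < 2 * n)
    (p : ℝ≥0∞) (hp : ENNReal.ofReal (2 * n / (2 * n - γ)) < p) :
    ∃ C : ℝ, 0 < C ∧
      ∀ f : EuclideanSpace ℂ (Fin N) → ℂ, MemLp f p μ →
        (∀ᵐ z ∂μ, Integrable
          (fun ζ => f ζ * ((‖z‖ ^ γ / (‖ζ‖ ^ γ * ‖ζ - z‖ ^ (2 * n - 1)) : ℝ) : ℂ)) μ) ∧
        eLpNorm
            (fun z => ∫ ζ, f ζ * ((‖z‖ ^ γ / (‖ζ‖ ^ γ * ‖ζ - z‖ ^ (2 * n - 1)) : ℝ) : ℂ) ∂μ)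
            p μ ≤
          ENNReal.ofReal C * eLpNorm f p μ := by
  classical
  set m : ℕ := 2 * n with hmdef
  have hm2 : 2 ≤ m := by omega
  have hm1 : 1 ≤ m := by omega
  have hmr : ((m : ℕ) : ℝ) = 2 * (n : ℝ) := by rw [hmdef]; push_cast; ring
  have hγm : γ < (m : ℝ) := by rw [hmr]; exact_mod_cast hγ'
  have hmre : (2:ℝ) ≤ (m : ℝ) := by exact_mod_cast hm2
  set e : ℝ := (m : ℝ) - 1 with hedef
  have he0 : 0 ≤ e := by rw [hedef]; linarith
  have hem : e < (m : ℝ) := by rw [hedef]; linarith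
  set B : ℝ := max R₁ 1 with hBdef
  have hB : 0 < B := lt_of_lt_of_le one_pos (le_max_right _ _)
  -- the kernel in `ℝ≥0∞` form
  set K : EuclideanSpace ℂ (Fin N) → EuclideanSpace ℂ (Fin N) → ℝ≥0∞ :=
    fun ζ z => ENNReal.ofReal (‖z‖ ^ γ * (‖ζ‖ ^ (-γ) * ‖ζ - z‖ ^ (-e))) with hKdef
  -- the real kernel is nonnegative and agrees with the `ℝ≥0∞` kernel
  have hcast : ((m - 1 : ℕ) : ℝ) = e := by
    rw [hedef, Nat.cast_sub hm1, Nat.cast_one]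
  have hkernel_nonneg : ∀ ζ z : EuclideanSpace ℂ (Fin N),
      0 ≤ ‖z‖ ^ γ / (‖ζ‖ ^ γ * ‖ζ - z‖ ^ (m - 1)) := fun ζ z => by positivity
  have hfact : ∀ ζ z : EuclideanSpace ℂ (Fin N),
      (‖z‖ ^ γ / (‖ζ‖ ^ γ * ‖ζ - z‖ ^ (m - 1)) : ℝ)
        = ‖z‖ ^ γ * (‖ζ‖ ^ (-γ) * ‖ζ - z‖ ^ (-e)) := by
    intro ζ z
    rw [Real.rpow_neg (norm_nonneg _), Real.rpow_neg (norm_nonneg _), ← hcast,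
      Real.rpow_natCast, div_eq_mul_inv, mul_inv]
  have hKofReal : ∀ ζ z : EuclideanSpace ℂ (Fin N),
      K ζ z = ENNReal.ofReal (‖z‖ ^ γ / (‖ζ‖ ^ γ * ‖ζ - z‖ ^ (m - 1))) := by
    intro ζ z; rw [hKdef, hfact]
  have hKmeas : Measurable (Function.uncurry K) := by
    rw [hKdef]
    apply Measurable.ennreal_ofReal
    fun_prop
  -- almost-every point is nonzero and in the ball of radius `B`
  have hsing : ∀ w, μ {w} = 0 := aux_singleton_null μ C₀ R m hm1 hR hAhlfors
  have hzae : ∀ᵐ z ∂μ, z ≠ 0 ∧ ‖z‖ ≤ B := by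
    have h1 : ∀ᵐ z ∂μ, z ≠ 0 := by
      rw [ae_iff]
      simpa using hsing 0
    have h2 : ∀ᵐ z ∂μ, ‖z‖ ≤ B := by
      rw [ae_iff]
      refine measure_mono_null ?_ hsupp
      intro z hz
      simp only [Set.mem_setOf_eq, not_le] at hz
      simp only [Set.mem_compl_iff, mem_closedBall, dist_zero_right, not_le]
      exact lt_of_le_of_lt (le_max_left _ _) hz
    exact h1.and h2
  rcases eq_or_ne p ∞ with hptop | hptop
  · -- case `p = ∞`
    subst hptop
    obtain ⟨A₁, hA₁, hcore⟩ := aux_core μ C₀ R m hm2 hC₀ hR hAhlfors γ hγ hγm B hB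
    refine ⟨A₁, hA₁, ?_⟩
    intro f hf
    have hsup_ne : eLpNormEssSup f μ ≠ ∞ := by
      have h := hf.2
      rw [eLpNorm_exponent_top] at h
      exact h.ne
    have hker_enorm : ∀ z ζ : EuclideanSpace ℂ (Fin N),
        (‖(f ζ * ((‖z‖ ^ γ / (‖ζ‖ ^ γ * ‖ζ - z‖ ^ (m - 1)) : ℝ) : ℂ))‖₊ : ℝ≥0∞)
          = (‖f ζ‖₊ : ℝ≥0∞) * K ζ z := by
      intro z ζ
      rw [nnnorm_mul, ENNReal.coe_mul, Complex.nnnorm_real,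
        (show ((‖(‖z‖ ^ γ / (‖ζ‖ ^ γ * ‖ζ - z‖ ^ (m - 1)) : ℝ)‖₊ : ℝ≥0∞)) = _ from Real.enorm_eq_ofReal (hkernel_nonneg ζ z)), hKofReal]
    have hsm : ∀ z : EuclideanSpace ℂ (Fin N), AEStronglyMeasurable
        (fun ζ => f ζ * ((‖z‖ ^ γ / (‖ζ‖ ^ γ * ‖ζ - z‖ ^ (m - 1)) : ℝ) : ℂ)) μ := by
      intro z
      refine hf.1.mul ?_
      refine Measurable.aestronglyMeasurable ?_
      exact Complex.measurable_ofReal.comp (by fun_prop)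
    have hIb : ∀ᵐ z ∂μ, ∫⁻ ζ, (‖f ζ‖₊ : ℝ≥0∞) * K ζ z ∂μ
        ≤ eLpNormEssSup f μ * ENNReal.ofReal A₁ := by
      filter_upwards [hzae] with z hz
      obtain ⟨hz0, hzB⟩ := hz
      have hz0' : (0:ℝ) < ‖z‖ := norm_pos_iff.2 hz0
      have hone : ‖z‖ ^ γ * ‖z‖ ^ (-γ) = 1 := by
        rw [← Real.rpow_add hz0']; simp
      have hKint : ∫⁻ ζ, K ζ z ∂μ ≤ ENNReal.ofReal A₁ := by
        have heq : ∀ ζ : EuclideanSpace ℂ (Fin N), K ζ z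
            = ENNReal.ofReal (‖z‖ ^ γ) * ENNReal.ofReal (‖ζ‖ ^ (-γ) * ‖ζ - z‖ ^ (-e)) := by
          intro ζ
          rw [hKdef, ← ENNReal.ofReal_mul (Real.rpow_nonneg (norm_nonneg _) _)]
        calc ∫⁻ ζ, K ζ z ∂μ
            = ENNReal.ofReal (‖z‖ ^ γ)
              * ∫⁻ ζ, ENNReal.ofReal (‖ζ‖ ^ (-γ) * ‖ζ - z‖ ^ (-e)) ∂μ := by
              simp_rw [heq]
              exact lintegral_const_mul _ (by fun_prop)
          _ ≤ ENNReal.ofReal (‖z‖ ^ γ) * ENNReal.ofReal (A₁ * ‖z‖ ^ (-γ)) := by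
              gcongr
              exact hcore z hz0 hzB
          _ = ENNReal.ofReal (‖z‖ ^ γ * (A₁ * ‖z‖ ^ (-γ))) := by
              rw [← ENNReal.ofReal_mul (Real.rpow_nonneg (norm_nonneg _) _)]
          _ = ENNReal.ofReal A₁ := by
              congr 1
              calc ‖z‖ ^ γ * (A₁ * ‖z‖ ^ (-γ)) = A₁ * (‖z‖ ^ γ * ‖z‖ ^ (-γ)) := by ring
                _ = A₁ := by rw [hone, mul_one]
      calc ∫⁻ ζ, (‖f ζ‖₊ : ℝ≥0∞) * K ζ z ∂μ
          ≤ ∫⁻ ζ, eLpNormEssSup f μ * K ζ z ∂μ :=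
            lintegral_mono_ae ((enorm_ae_le_eLpNormEssSup f μ).mono
              fun ζ h => mul_le_mul_left h _)
        _ = eLpNormEssSup f μ * ∫⁻ ζ, K ζ z ∂μ := lintegral_const_mul' _ _ hsup_ne
        _ ≤ eLpNormEssSup f μ * ENNReal.ofReal A₁ := mul_le_mul_right hKint _
    constructor
    · filter_upwards [hIb] with z hz
      refine ⟨hsm z, ?_⟩
      rw [hasFiniteIntegral_def]
      calc ∫⁻ ζ, (‖(f ζ * ((‖z‖ ^ γ / (‖ζ‖ ^ γ * ‖ζ - z‖ ^ (m - 1)) : ℝ) : ℂ))‖₊ : ℝ≥0∞) ∂μ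
          = ∫⁻ ζ, (‖f ζ‖₊ : ℝ≥0∞) * K ζ z ∂μ := lintegral_congr fun ζ => hker_enorm z ζ
        _ ≤ eLpNormEssSup f μ * ENNReal.ofReal A₁ := hz
        _ < ∞ := ENNReal.mul_lt_top hsup_ne.lt_top ENNReal.ofReal_lt_top
    · rw [eLpNorm_exponent_top, eLpNorm_exponent_top]
      have hTb : ∀ᵐ z ∂μ, (‖∫ ζ, f ζ * ((‖z‖ ^ γ / (‖ζ‖ ^ γ * ‖ζ - z‖ ^ (m - 1)) : ℝ) : ℂ) ∂μ‖₊ : ℝ≥0∞)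
          ≤ ENNReal.ofReal A₁ * eLpNormEssSup f μ := by
        filter_upwards [hIb] with z hz
        calc (‖∫ ζ, f ζ * ((‖z‖ ^ γ / (‖ζ‖ ^ γ * ‖ζ - z‖ ^ (m - 1)) : ℝ) : ℂ) ∂μ‖₊ : ℝ≥0∞)
            ≤ ∫⁻ ζ, (‖(f ζ * ((‖z‖ ^ γ / (‖ζ‖ ^ γ * ‖ζ - z‖ ^ (m - 1)) : ℝ) : ℂ))‖₊ : ℝ≥0∞) ∂μ :=
              enorm_integral_le_lintegral_enorm _
          _ = ∫⁻ ζ, (‖f ζ‖₊ : ℝ≥0∞) * K ζ z ∂μ := lintegral_congr fun ζ => hker_enorm z ζ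
          _ ≤ eLpNormEssSup f μ * ENNReal.ofReal A₁ := hz
          _ = ENNReal.ofReal A₁ * eLpNormEssSup f μ := mul_comm _ _
      exact essSup_le_of_ae_le _ hTb
  · -- case `p ≠ ∞`
    have hp1 : (1:ℝ≥0∞) < p := by
      refine lt_of_le_of_lt ?_ hp
      rw [show (1:ℝ≥0∞) = ENNReal.ofReal 1 by simp]
      apply ENNReal.ofReal_le_ofReal
      rw [le_div_iff₀ (by linarith : (0:ℝ) < 2 * (n:ℝ) - γ)]
      linarith
    have hp0' : p ≠ 0 := (zero_lt_one.trans hp1).ne'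
    set pr : ℝ := p.toReal with hprdef
    have hpr1 : 1 < pr := by
      rw [hprdef, ← ENNReal.toReal_one]
      exact (ENNReal.toReal_lt_toReal (by simp) hptop).mpr hp1
    have hpr0 : 0 < pr := by linarith
    have h2n : (m:ℝ) / ((m:ℝ) - γ) < pr := by
      have hlt := hp
      rw [← ENNReal.ofReal_toReal hptop] at hlt
      rw [ENNReal.ofReal_lt_ofReal_iff (by linarith)] at hlt
      rw [hmr]
      exact hlt
    set q : ℝ := pr / (pr - 1) with hqdef
    have hpq : pr.HolderConjugate q := Real.HolderConjugate.conjExponent hpr1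
    have hq0 : 0 < q := hpq.symm.pos
    have hpqsum : pr + q = pr * q := by
      have h := hpq.inv_add_inv_eq_one
      field_simp at h
      linarith
    have hγq : γ * q < (m:ℝ) := by
      have hmγ : 0 < (m:ℝ) - γ := by linarith
      have key : (m:ℝ) < pr * ((m:ℝ) - γ) := by
        rw [div_lt_iff₀ hmγ] at h2n; linarith
      have hpr1' : (0:ℝ) < pr - 1 := by linarith
      rw [hqdef, ← mul_div_assoc, div_lt_iff₀ hpr1']
      nlinarith
    set s : ℝ := γ / pr with hsdef
    have hspr : s * pr = γ := by rw [hsdef]; field_simp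
    have hsq : γ + s * q = γ * q := by
      rw [hsdef]
      field_simp
      nlinarith [hpqsum]
    have hβ₁0 : 0 ≤ γ * q := mul_nonneg hγ hq0.le
    obtain ⟨A₁, hA₁, hcore1⟩ := aux_core μ C₀ R m hm2 hC₀ hR hAhlfors (γ * q) hβ₁0 hγq B hB
    obtain ⟨Cu, hCu, hUe⟩ := aux_uniform μ C₀ R m hm1 hC₀ hR hAhlfors e he0 hem
    set Am : ℝ := max A₁ Cu with hAmdef
    have hAm : 0 < Am := lt_of_lt_of_le hA₁ (le_max_left _ _)
    refine ⟨Am, hAm, ?_⟩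
    intro f hf
    set H : EuclideanSpace ℂ (Fin N) → ℝ≥0∞ := fun w => ENNReal.ofReal (‖w‖ ^ (-s)) with hHdef
    have hHmeas : Measurable H := by rw [hHdef]; fun_prop
    have hH0 : ∀ᵐ x ∂μ, H x ≠ 0 := by
      filter_upwards [hzae] with x hx
      rw [hHdef]
      simp only [ne_eq, ENNReal.ofReal_eq_zero, not_le]
      exact Real.rpow_pos_of_pos (norm_pos_iff.2 hx.1) _
    have hHtop : ∀ x, H x ≠ ∞ := fun x => ENNReal.ofReal_ne_top
    have hHq : ∀ w : EuclideanSpace ℂ (Fin N), H w ^ q = ENNReal.ofReal (‖w‖ ^ (-(s*q))) := by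
      intro w
      rw [hHdef]
      simp only
      rw [ENNReal.ofReal_rpow_of_nonneg (Real.rpow_nonneg (norm_nonneg _) _) hq0.le,
        ← Real.rpow_mul (norm_nonneg _)]
      congr 2
      ring
    have hHpr : ∀ w : EuclideanSpace ℂ (Fin N), H w ^ pr = ENNReal.ofReal (‖w‖ ^ (-γ)) := by
      intro w
      rw [hHdef]
      simp only
      rw [ENNReal.ofReal_rpow_of_nonneg (Real.rpow_nonneg (norm_nonneg _) _) hpr0.le,
        ← Real.rpow_mul (norm_nonneg _)]
      congr 2
      rw [neg_mul]
      rw [hspr]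
    -- hypothesis (i) of the Schur test
    have hi : ∀ᵐ z ∂μ, ∫⁻ ζ, K ζ z * H ζ ^ q ∂μ ≤ ENNReal.ofReal Am * H z ^ q := by
      filter_upwards [hzae] with z hz
      obtain ⟨hz0, hzB⟩ := hz
      have hz0' : (0:ℝ) < ‖z‖ := norm_pos_iff.2 hz0
      have hmerge : ∀ x : ℝ, 0 ≤ x → x ^ (-γ) * x ^ (-(s*q)) = x ^ (-(γ * q)) := by
        intro x hx
        rcases eq_or_ne γ 0 with h0 | h0
        · simp [hsdef, h0]
        · rw [← Real.rpow_add' hx ?_]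
          · congr 1; linarith [hsq]
          · have hne : γ * q ≠ 0 := mul_ne_zero h0 hq0.ne'
            intro hcon
            exact hne (by linarith [hsq])
      have hKint : ∀ ζ : EuclideanSpace ℂ (Fin N), K ζ z * H ζ ^ q
          = ENNReal.ofReal (‖z‖ ^ γ) * ENNReal.ofReal (‖ζ‖ ^ (-(γ * q)) * ‖ζ - z‖ ^ (-e)) := by
        intro ζ
        rw [hHq, hKdef]
        simp only
        rw [← ENNReal.ofReal_mul (by positivity),
          ← ENNReal.ofReal_mul (Real.rpow_nonneg (norm_nonneg _) _)]
        congr 1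
        have hme := hmerge ‖ζ‖ (norm_nonneg _)
        calc ‖z‖^γ * (‖ζ‖^(-γ) * ‖ζ-z‖^(-e)) * ‖ζ‖^(-(s*q))
            = ‖z‖^γ * ((‖ζ‖^(-γ) * ‖ζ‖^(-(s*q))) * ‖ζ-z‖^(-e)) := by ring
          _ = ‖z‖^γ * (‖ζ‖^(-(γ*q)) * ‖ζ-z‖^(-e)) := by rw [hme]
      calc ∫⁻ ζ, K ζ z * H ζ ^ q ∂μ
          = ENNReal.ofReal (‖z‖^γ) * ∫⁻ ζ, ENNReal.ofReal (‖ζ‖^(-(γ*q)) * ‖ζ - z‖^(-e)) ∂μ := by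
            simp_rw [hKint]
            exact lintegral_const_mul _ (by fun_prop)
        _ ≤ ENNReal.ofReal (‖z‖^γ) * ENNReal.ofReal (A₁ * ‖z‖^(-(γ*q))) := by
            gcongr
            exact hcore1 z hz0 hzB
        _ = ENNReal.ofReal (A₁ * (‖z‖^γ * ‖z‖^(-(γ*q)))) := by
            rw [← ENNReal.ofReal_mul (Real.rpow_nonneg (norm_nonneg _) _)]
            congr 1
            ring
        _ = ENNReal.ofReal A₁ * H z ^ q := by
            rw [hHq, ← ENNReal.ofReal_mul hA₁.le]
            congr 2
            rw [← Real.rpow_add hz0']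
            congr 1
            linarith [hsq]
        _ ≤ ENNReal.ofReal Am * H z ^ q :=
            mul_le_mul_left (ENNReal.ofReal_le_ofReal (le_max_left _ _)) _
    -- hypothesis (ii) of the Schur test
    have hii : ∀ ζ : EuclideanSpace ℂ (Fin N),
        ∫⁻ z, K ζ z * H z ^ pr ∂μ ≤ ENNReal.ofReal Am * H ζ ^ pr := by
      intro ζ
      have hbound : ∀ z : EuclideanSpace ℂ (Fin N), K ζ z * H z ^ pr
          ≤ ENNReal.ofReal (‖ζ‖ ^ (-γ)) * ENNReal.ofReal (‖ζ - z‖ ^ (-e)) := by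
        intro z
        rw [hHpr, hKdef]
        simp only
        rw [← ENNReal.ofReal_mul (by positivity),
          ← ENNReal.ofReal_mul (Real.rpow_nonneg (norm_nonneg _) _)]
        apply ENNReal.ofReal_le_ofReal
        have hone : ‖z‖^γ * ‖z‖^(-γ) ≤ 1 := by
          rcases eq_or_ne γ 0 with h0 | h0
          · simp [h0]
          · rcases eq_or_ne ‖z‖ 0 with hz | hz
            · rw [hz, Real.zero_rpow h0]; simp
            · have hzpos : 0 < ‖z‖ := lt_of_le_of_ne (norm_nonneg z) (Ne.symm hz)
              rw [← Real.rpow_add hzpos]; simp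
        calc ‖z‖^γ * (‖ζ‖^(-γ) * ‖ζ-z‖^(-e)) * ‖z‖^(-γ)
            = (‖z‖^γ * ‖z‖^(-γ)) * (‖ζ‖^(-γ) * ‖ζ-z‖^(-e)) := by ring
          _ ≤ 1 * (‖ζ‖^(-γ) * ‖ζ-z‖^(-e)) :=
              mul_le_mul_of_nonneg_right hone (by positivity)
          _ = ‖ζ‖^(-γ) * ‖ζ-z‖^(-e) := one_mul _
      calc ∫⁻ z, K ζ z * H z ^ pr ∂μ
          ≤ ∫⁻ z, ENNReal.ofReal (‖ζ‖^(-γ)) * ENNReal.ofReal (‖ζ - z‖^(-e)) ∂μ :=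
            lintegral_mono hbound
        _ = ENNReal.ofReal (‖ζ‖^(-γ)) * ∫⁻ z, ENNReal.ofReal (‖ζ - z‖^(-e)) ∂μ :=
            lintegral_const_mul _ (by fun_prop)
        _ ≤ ENNReal.ofReal (‖ζ‖^(-γ)) * ENNReal.ofReal Cu := by
            gcongr
            calc ∫⁻ z, ENNReal.ofReal (‖ζ - z‖^(-e)) ∂μ
                = ∫⁻ z, ENNReal.ofReal (‖z - ζ‖^(-e)) ∂μ :=
                  lintegral_congr fun z => by rw [norm_sub_rev]
              _ ≤ ENNReal.ofReal Cu := hUe ζ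
        _ ≤ ENNReal.ofReal Am * H ζ ^ pr := by
            rw [hHpr, mul_comm]
            exact mul_le_mul_left (ENNReal.ofReal_le_ofReal (le_max_right _ _)) _
    -- apply the Schur test
    set g : EuclideanSpace ℂ (Fin N) → ℝ≥0∞ := fun ζ => (‖f ζ‖₊ : ℝ≥0∞) with hgdef
    have hg : AEMeasurable g μ := hf.1.enorm
    have schur := aux_schur μ K hKmeas H hHmeas hH0 hHtop pr q hpq (ENNReal.ofReal Am)
      (by simp only [ne_eq, ENNReal.ofReal_eq_zero, not_le]; exact hAm) ENNReal.ofReal_ne_top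
      hi (Filter.Eventually.of_forall hii) g hg
    -- the `L^p` norm of `f` as a lintegral
    have hsnorm_pow : ∫⁻ x, g x ^ pr ∂μ = (eLpNorm f p μ) ^ pr := by
      rw [eLpNorm_eq_lintegral_rpow_enorm_toReal hp0' hptop, ← ENNReal.rpow_mul, one_div,
        inv_mul_cancel₀ hpr0.ne', ENNReal.rpow_one]
      rfl
    have hsnorm_fin : ∫⁻ x, g x ^ pr ∂μ ≠ ∞ := by
      rw [hsnorm_pow]
      exact (ENNReal.rpow_lt_top_of_nonneg hpr0.le hf.2.ne).ne
    -- a measurable representative for `g` to get measurability of the inner integral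
    obtain ⟨g₀, hg₀, hgg₀⟩ : ∃ g₀, Measurable g₀ ∧ g =ᵐ[μ] g₀ :=
      ⟨hg.mk g, hg.measurable_mk, hg.ae_eq_mk⟩
    have hIeq : ∀ z, ∫⁻ ζ, g ζ * K ζ z ∂μ = ∫⁻ ζ, g₀ ζ * K ζ z ∂μ := fun z =>
      lintegral_congr_ae (hgg₀.mono fun ζ h => by simp only [h])
    have hImeas : Measurable fun z => ∫⁻ ζ, g₀ ζ * K ζ z ∂μ :=
      Measurable.lintegral_prod_left' ((hg₀.comp measurable_fst).mul hKmeas)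
    have hIpow_fin : ∫⁻ z, (∫⁻ ζ, g₀ ζ * K ζ z ∂μ) ^ pr ∂μ ≠ ∞ := by
      have hb := schur
      simp_rw [hIeq] at hb
      refine ne_of_lt (lt_of_le_of_lt hb ?_)
      exact ENNReal.mul_lt_top
        (ENNReal.rpow_lt_top_of_nonneg hpr0.le ENNReal.ofReal_ne_top) hsnorm_fin.lt_top
    have hIfin : ∀ᵐ z ∂μ, ∫⁻ ζ, g ζ * K ζ z ∂μ < ∞ := by
      have h := ae_lt_top (hImeas.pow_const pr) hIpow_fin
      filter_upwards [h] with z hz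
      rw [hIeq z]
      exact (ENNReal.rpow_lt_top_iff_of_pos hpr0).1 hz
    -- kernel enorm identity and measurability
    have hker_enorm : ∀ z ζ : EuclideanSpace ℂ (Fin N),
        (‖(f ζ * ((‖z‖ ^ γ / (‖ζ‖ ^ γ * ‖ζ - z‖ ^ (m - 1)) : ℝ) : ℂ))‖₊ : ℝ≥0∞)
          = g ζ * K ζ z := by
      intro z ζ
      rw [hgdef, nnnorm_mul, ENNReal.coe_mul, Complex.nnnorm_real,
        (show ((‖(‖z‖ ^ γ / (‖ζ‖ ^ γ * ‖ζ - z‖ ^ (m - 1)) : ℝ)‖₊ : ℝ≥0∞)) = _ from Real.enorm_eq_ofReal (hkernel_nonneg ζ z)), hKofReal]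
    have hsm : ∀ z : EuclideanSpace ℂ (Fin N), AEStronglyMeasurable
        (fun ζ => f ζ * ((‖z‖ ^ γ / (‖ζ‖ ^ γ * ‖ζ - z‖ ^ (m - 1)) : ℝ) : ℂ)) μ := by
      intro z
      refine hf.1.mul ?_
      refine Measurable.aestronglyMeasurable ?_
      exact Complex.measurable_ofReal.comp (by fun_prop)
    constructor
    · filter_upwards [hIfin] with z hz
      refine ⟨hsm z, ?_⟩
      rw [hasFiniteIntegral_def]
      calc ∫⁻ ζ, (‖(f ζ * ((‖z‖ ^ γ / (‖ζ‖ ^ γ * ‖ζ - z‖ ^ (m - 1)) : ℝ) : ℂ))‖₊ : ℝ≥0∞) ∂μ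
          = ∫⁻ ζ, g ζ * K ζ z ∂μ := lintegral_congr fun ζ => hker_enorm z ζ
        _ < ∞ := hz
    · -- the norm bound
      rw [eLpNorm_eq_lintegral_rpow_enorm_toReal hp0' hptop,
        eLpNorm_eq_lintegral_rpow_enorm_toReal hp0' hptop]
      have hTz : ∀ z : EuclideanSpace ℂ (Fin N),
          (‖∫ ζ, f ζ * ((‖z‖ ^ γ / (‖ζ‖ ^ γ * ‖ζ - z‖ ^ (m - 1)) : ℝ) : ℂ) ∂μ‖₊ : ℝ≥0∞) ^ p.toReal
            ≤ (∫⁻ ζ, g ζ * K ζ z ∂μ) ^ pr := by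
        intro z
        refine ENNReal.rpow_le_rpow ?_ hpr0.le
        calc (‖∫ ζ, f ζ * ((‖z‖ ^ γ / (‖ζ‖ ^ γ * ‖ζ - z‖ ^ (m - 1)) : ℝ) : ℂ) ∂μ‖₊ : ℝ≥0∞)
            ≤ ∫⁻ ζ, (‖(f ζ * ((‖z‖ ^ γ / (‖ζ‖ ^ γ * ‖ζ - z‖ ^ (m - 1)) : ℝ) : ℂ))‖₊ : ℝ≥0∞) ∂μ :=
              enorm_integral_le_lintegral_enorm _
          _ = ∫⁻ ζ, g ζ * K ζ z ∂μ := lintegral_congr fun ζ => hker_enorm z ζ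
      calc (∫⁻ z, (‖∫ ζ, f ζ * ((‖z‖ ^ γ / (‖ζ‖ ^ γ * ‖ζ - z‖ ^ (m - 1)) : ℝ) : ℂ) ∂μ‖₊ : ℝ≥0∞)
              ^ p.toReal ∂μ) ^ (1 / p.toReal)
          ≤ (∫⁻ z, (∫⁻ ζ, g ζ * K ζ z ∂μ) ^ pr ∂μ) ^ (1 / pr) :=
            ENNReal.rpow_le_rpow (lintegral_mono fun z => hTz z) (by positivity)
        _ ≤ ((ENNReal.ofReal Am) ^ pr * ∫⁻ x, g x ^ pr ∂μ) ^ (1 / pr) :=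
            ENNReal.rpow_le_rpow schur (by positivity)
        _ = ENNReal.ofReal Am * (∫⁻ x, g x ^ pr ∂μ) ^ (1 / pr) := by
            rw [ENNReal.mul_rpow_of_nonneg _ _ (by positivity), ← ENNReal.rpow_mul,
              mul_one_div, div_self hpr0.ne', ENNReal.rpow_one]
        _ = ENNReal.ofReal Am * (∫⁻ x, (‖f x‖₊ : ℝ≥0∞) ^ p.toReal ∂μ) ^ (1 / p.toReal) := by
            rw [hgdef]
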